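/- For K = 2 and any I ≥ 4, the number of identity states equals 7; that is, the number of orbits of pairs of count vectors of size 2 on Fin I under the S₂ × S_I action is 7. -/

import Mathlib

open Finset

/-- The orbit of an ordered pair of count vectors `(g₁, g₂)` under the action of
`S₂ × S_I`: the `S₂` factor swaps the two count vectors, and a permutation
`σ ∈ S_I` relabels the index set of both count vectors by precomposition
with `σ⁻¹`. -/
def pairOrbit (I : ℕ) (x : (Fin I → ℕ) × (Fin I → ℕ)) :
    Set ((Fin I → ℕ) × (Fin I → ℕ)) :=
  {y | ∃ σ : Equiv.Perm (Fin I),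
    y = (x.1 ∘ ⇑σ.symm, x.2 ∘ ⇑σ.symm) ∨ y = (x.2 ∘ ⇑σ.symm, x.1 ∘ ⇑σ.symm)}

/-- The set of identity states `C^K_I`: the orbits of pairs of count vectors of
size `K` on `Fin I` under the `S₂ × S_I` action. -/
def IdentityStates (K I : ℕ) :=
  {S : Set ((Fin I → ℕ) × (Fin I → ℕ)) //
    ∃ x : (Fin I → ℕ) × (Fin I → ℕ),
      (∑ i, x.1 i = K) ∧ (∑ i, x.2 i = K) ∧ S = pairOrbit I x}

section Aux
variable {I : ℕ}

/-- count vector with value 2 at `a`. -/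
def dbl (a : Fin I) : Fin I → ℕ := fun i => if i = a then 2 else 0

/-- count vector with value 1 at `a` and at `b`. -/
def spl (a b : Fin I) : Fin I → ℕ :=
  fun i => (if i = a then 1 else 0) + (if i = b then 1 else 0)

lemma spl_comm (a b : Fin I) : spl a b = spl b a := by
  funext i; simp [spl, add_comm]

lemma dbl_comp (a : Fin I) (σ : Equiv.Perm (Fin I)) :
    dbl a ∘ ⇑σ.symm = dbl (σ a) := by
  funext i; simp [dbl, Equiv.symm_apply_eq]

lemma spl_comp (a b : Fin I) (σ : Equiv.Perm (Fin I)) :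
    spl a b ∘ ⇑σ.symm = spl (σ a) (σ b) := by
  funext i; simp [spl, Equiv.symm_apply_eq]

lemma sum_dbl (a : Fin I) : ∑ i, dbl a i = 2 := by
  simp [dbl, Finset.sum_ite_eq']

lemma sum_spl (a b : Fin I) : ∑ i, spl a b i = 2 := by
  simp [spl, Finset.sum_add_distrib, Finset.sum_ite_eq']

lemma classify (g : Fin I → ℕ) (h : ∑ i, g i = 2) :
    (∃ a, g = dbl a) ∨ ∃ a b, a ≠ b ∧ g = spl a b := by
  have h0 : ∃ a, g a ≠ 0 := by
    by_contra h'
    push_neg at h'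
    simp [h'] at h
  obtain ⟨a, ha⟩ := h0
  have hsplit : g a + ∑ i ∈ univ.erase a, g i = 2 := by
    rw [Finset.add_sum_erase _ g (mem_univ a)]; exact h
  rcases Nat.lt_or_ge (g a) 2 with h1 | h2
  · have hga : g a = 1 := by omega
    have hrest : ∑ i ∈ univ.erase a, g i = 1 := by omega
    have hb0 : ∃ b ∈ univ.erase a, g b ≠ 0 := by
      by_contra h'
      push_neg at h'
      rw [Finset.sum_eq_zero h'] at hrest; omega
    obtain ⟨b, hb, hgb⟩ := hb0
    have hba : b ≠ a := (Finset.mem_erase.mp hb).1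
    have hsplit2 : g b + ∑ i ∈ (univ.erase a).erase b, g i = 1 := by
      rw [Finset.add_sum_erase _ g hb]; exact hrest
    have hgb1 : g b = 1 := by omega
    have hz : ∀ i ∈ (univ.erase a).erase b, g i = 0 := by
      have hzz : ∑ i ∈ (univ.erase a).erase b, g i = 0 := by omega
      intro i hi
      exact (Finset.sum_eq_zero_iff.mp hzz) i hi
    right
    refine ⟨a, b, hba.symm, funext fun i => ?_⟩
    by_cases hia : i = a
    · subst hia; simp [spl, hba.symm, hga]
    · by_cases hib : i = b
      · subst hib; simp [spl, hia, hgb1]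
      · have : g i = 0 := hz i (by simp [Finset.mem_erase, hia, hib])
        simp [spl, hia, hib, this]
  · have hga : g a = 2 := by omega
    have hz : ∀ i ∈ univ.erase a, g i = 0 := by
      have hzz : ∑ i ∈ univ.erase a, g i = 0 := by omega
      intro i hi; exact (Finset.sum_eq_zero_iff.mp hzz) i hi
    left
    refine ⟨a, funext fun i => ?_⟩
    by_cases hia : i = a
    · subst hia; simp [dbl, hga]
    · have : g i = 0 := hz i (by simp [Finset.mem_erase, hia])
      simp [dbl, hia, this]

lemma mem_pairOrbit_self (x : (Fin I → ℕ) × (Fin I → ℕ)) : x ∈ pairOrbit I x := by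
  exact ⟨1, Or.inl rfl⟩

lemma pairOrbit_symm {x y : (Fin I → ℕ) × (Fin I → ℕ)}
    (h : y ∈ pairOrbit I x) : x ∈ pairOrbit I y := by
  rcases h with ⟨σ, rfl | rfl⟩
  · exact ⟨σ.symm, Or.inl (by ext i <;> simp [Equiv.Perm.mul_def])⟩
  · exact ⟨σ.symm, Or.inr (by ext i <;> simp)⟩

lemma pairOrbit_trans {x y z : (Fin I → ℕ) × (Fin I → ℕ)}
    (h1 : z ∈ pairOrbit I y) (h2 : y ∈ pairOrbit I x) : z ∈ pairOrbit I x := by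
  rcases h1 with ⟨τ, rfl | rfl⟩ <;> rcases h2 with ⟨σ, rfl | rfl⟩
  · exact ⟨τ * σ, Or.inl (by ext i <;> simp [Equiv.Perm.mul_def])⟩
  · exact ⟨τ * σ, Or.inr (by ext i <;> simp [Equiv.Perm.mul_def])⟩
  · exact ⟨τ * σ, Or.inr (by ext i <;> simp [Equiv.Perm.mul_def])⟩
  · exact ⟨τ * σ, Or.inl (by ext i <;> simp [Equiv.Perm.mul_def])⟩

lemma pairOrbit_eq_of_mem {x y : (Fin I → ℕ) × (Fin I → ℕ)}
    (h : y ∈ pairOrbit I x) : pairOrbit I y = pairOrbit I x :=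
  Set.ext fun z =>
    ⟨fun hz => pairOrbit_trans hz h, fun hz => pairOrbit_trans hz (pairOrbit_symm h)⟩

end Aux

section Aux2
variable {I : ℕ}
open Equiv

lemma exists_perm1 (p a : Fin I) : ∃ σ : Equiv.Perm (Fin I), σ p = a :=
  ⟨Equiv.swap p a, Equiv.swap_apply_left p a⟩

lemma exists_perm2 {p q a b : Fin I} (hpq : p ≠ q) (hab : a ≠ b) :
    ∃ σ : Equiv.Perm (Fin I), σ p = a ∧ σ q = b := by
  set τ1 := Equiv.swap p a with hτ1
  have h1 : τ1 p = a := Equiv.swap_apply_left p a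
  set b1 := τ1 q with hb1def
  have hb1 : b1 ≠ a := by
    rw [← h1]; exact fun h => hpq (τ1.injective h).symm
  refine ⟨τ1.trans (Equiv.swap b1 b), ?_, ?_⟩
  · simp only [Equiv.trans_apply, h1]
    exact Equiv.swap_apply_of_ne_of_ne hb1.symm hab
  · simp only [Equiv.trans_apply, ← hb1def]
    exact Equiv.swap_apply_left b1 b

lemma exists_perm3 {p q r a b c : Fin I} (hpq : p ≠ q) (hpr : p ≠ r) (hqr : q ≠ r)
    (hab : a ≠ b) (hac : a ≠ c) (hbc : b ≠ c) :
    ∃ σ : Equiv.Perm (Fin I), σ p = a ∧ σ q = b ∧ σ r = c := by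
  obtain ⟨σ2, h2a, h2b⟩ := exists_perm2 hpq hab
  set c2 := σ2 r with hc2def
  have hc2a : c2 ≠ a := by rw [← h2a]; exact fun h => hpr (σ2.injective h).symm
  have hc2b : c2 ≠ b := by rw [← h2b]; exact fun h => hqr (σ2.injective h).symm
  refine ⟨σ2.trans (Equiv.swap c2 c), ?_, ?_, ?_⟩
  · simp only [Equiv.trans_apply, h2a]
    exact Equiv.swap_apply_of_ne_of_ne hc2a.symm hac
  · simp only [Equiv.trans_apply, h2b]
    exact Equiv.swap_apply_of_ne_of_ne hc2b.symm hbc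
  · simp only [Equiv.trans_apply, ← hc2def]
    exact Equiv.swap_apply_left c2 c

lemma exists_perm4 {p q r s a b c d : Fin I}
    (hpq : p ≠ q) (hpr : p ≠ r) (hps : p ≠ s) (hqr : q ≠ r) (hqs : q ≠ s) (hrs : r ≠ s)
    (hab : a ≠ b) (hac : a ≠ c) (had : a ≠ d) (hbc : b ≠ c) (hbd : b ≠ d) (hcd : c ≠ d) :
    ∃ σ : Equiv.Perm (Fin I), σ p = a ∧ σ q = b ∧ σ r = c ∧ σ s = d := by
  obtain ⟨σ3, h3a, h3b, h3c⟩ := exists_perm3 hpq hpr hqr hab hac hbc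
  set d3 := σ3 s with hd3def
  have hd3a : d3 ≠ a := by rw [← h3a]; exact fun h => hps (σ3.injective h).symm
  have hd3b : d3 ≠ b := by rw [← h3b]; exact fun h => hqs (σ3.injective h).symm
  have hd3c : d3 ≠ c := by rw [← h3c]; exact fun h => hrs (σ3.injective h).symm
  refine ⟨σ3.trans (Equiv.swap d3 d), ?_, ?_, ?_, ?_⟩
  · simp only [Equiv.trans_apply, h3a]
    exact Equiv.swap_apply_of_ne_of_ne hd3a.symm had
  · simp only [Equiv.trans_apply, h3b]
    exact Equiv.swap_apply_of_ne_of_ne hd3b.symm hbd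
  · simp only [Equiv.trans_apply, h3c]
    exact Equiv.swap_apply_of_ne_of_ne hd3c.symm hcd
  · simp only [Equiv.trans_apply, ← hd3def]
    exact Equiv.swap_apply_left d3 d

lemma sum_delta_mul (a b : Fin I) (m n : ℕ) :
    ∑ i, (if i = a then m else 0) * (if i = b then n else 0)
      = if a = b then m * n else 0 := by
  have key : ∀ i : Fin I, (if i = a then m else 0) * (if i = b then n else 0)
      = if i = a then (if a = b then m * n else 0) else 0 := by
    intro i
    by_cases h1 : i = a
    · subst h1; by_cases h2 : i = b <;> simp [h2]
    · simp [h1]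
  simp_rw [key]
  simp [Finset.sum_ite_eq']

lemma sum_sq_dbl (a : Fin I) : ∑ i, (dbl a i) ^ 2 = 4 := by
  simp only [dbl, sq]
  rw [sum_delta_mul]
  simp

lemma inner_dbl_dbl (a b : Fin I) :
    ∑ i, dbl a i * dbl b i = if a = b then 4 else 0 := by
  simp only [dbl]
  rw [sum_delta_mul]

lemma inner_dbl_spl (a b c : Fin I) :
    ∑ i, dbl a i * spl b c i
      = (if a = b then 2 else 0) + (if a = c then 2 else 0) := by
  simp only [dbl, spl, mul_add]
  rw [Finset.sum_add_distrib, sum_delta_mul, sum_delta_mul]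

lemma inner_spl_spl (a b c d : Fin I) :
    ∑ i, spl a b i * spl c d i
      = ((if a = c then 1 else 0) + (if a = d then 1 else 0))
        + ((if b = c then 1 else 0) + (if b = d then 1 else 0)) := by
  simp only [spl, mul_add, add_mul]
  rw [Finset.sum_add_distrib, Finset.sum_add_distrib, Finset.sum_add_distrib,
    sum_delta_mul, sum_delta_mul, sum_delta_mul, sum_delta_mul]
  simp only [mul_one]
  split_ifs <;> omega

lemma sum_sq_spl {a b : Fin I} (hab : a ≠ b) : ∑ i, (spl a b i) ^ 2 = 2 := by
  simp only [sq]
  rw [inner_spl_spl]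
  simp [hab, hab.symm]

/-- invariants of the action -/
def phi (x : (Fin I → ℕ) × (Fin I → ℕ)) : ℕ × ℕ :=
  (∑ i, (x.1 i) ^ 2 + ∑ i, (x.2 i) ^ 2, ∑ i, x.1 i * x.2 i)

lemma phi_eq_of_mem {x y : (Fin I → ℕ) × (Fin I → ℕ)}
    (h : y ∈ pairOrbit I x) : phi y = phi x := by
  rcases h with ⟨σ, rfl | rfl⟩
  · simp only [phi, Function.comp]
    rw [Equiv.sum_comp σ.symm (fun j => (x.1 j) ^ 2),
      Equiv.sum_comp σ.symm (fun j => (x.2 j) ^ 2),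
      Equiv.sum_comp σ.symm (fun j => x.1 j * x.2 j)]
  · simp only [phi, Function.comp]
    rw [Equiv.sum_comp σ.symm (fun j => (x.1 j) ^ 2),
      Equiv.sum_comp σ.symm (fun j => (x.2 j) ^ 2),
      Equiv.sum_comp σ.symm (fun j => x.2 j * x.1 j)]
    simp only [Prod.mk.injEq]
    exact ⟨add_comm _ _, Finset.sum_congr rfl fun i _ => mul_comm _ _⟩

end Aux2

section Aux3
variable {I : ℕ}

lemma main_mem (q0 q1 q2 q3 : Fin I)
    (h01 : q0 ≠ q1) (h02 : q0 ≠ q2) (h03 : q0 ≠ q3)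
    (h12 : q1 ≠ q2) (h13 : q1 ≠ q3) (h23 : q2 ≠ q3)
    (x : (Fin I → ℕ) × (Fin I → ℕ))
    (hx1 : ∑ i, x.1 i = 2) (hx2 : ∑ i, x.2 i = 2) :
    x ∈ pairOrbit I (dbl q0, dbl q0) ∨ x ∈ pairOrbit I (dbl q0, dbl q1) ∨
    x ∈ pairOrbit I (dbl q0, spl q0 q1) ∨ x ∈ pairOrbit I (dbl q0, spl q1 q2) ∨
    x ∈ pairOrbit I (spl q0 q1, spl q0 q1) ∨ x ∈ pairOrbit I (spl q0 q1, spl q0 q2) ∨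
    x ∈ pairOrbit I (spl q0 q1, spl q2 q3) := by
  obtain ⟨g1, g2⟩ := x
  simp only at hx1 hx2
  rcases classify g1 hx1 with ⟨a, rfl⟩ | ⟨a, b, hab, rfl⟩
  · rcases classify g2 hx2 with ⟨b, rfl⟩ | ⟨b, c, hbc, rfl⟩
    · -- (dbl a, dbl b)
      by_cases hab : a = b
      · subst hab
        obtain ⟨σ, h1⟩ := exists_perm1 q0 a
        exact Or.inl ⟨σ, Or.inl (by simp [dbl_comp, h1])⟩
      · obtain ⟨σ, h1, h2⟩ := exists_perm2 h01 hab
        exact Or.inr (Or.inl ⟨σ, Or.inl (by simp [dbl_comp, h1, h2])⟩)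
    · -- (dbl a, spl b c)
      by_cases hab : a = b
      · subst hab
        obtain ⟨σ, h1, h2⟩ := exists_perm2 h01 hbc
        exact Or.inr (Or.inr (Or.inl ⟨σ, Or.inl
          (by simp [dbl_comp, spl_comp, h1, h2])⟩))
      · by_cases hac : a = c
        · subst hac
          obtain ⟨σ, h1, h2⟩ := exists_perm2 h01 hbc.symm
          exact Or.inr (Or.inr (Or.inl ⟨σ, Or.inl
            (by simp [dbl_comp, spl_comp, h1, h2, spl_comm a b])⟩))
        · obtain ⟨σ, h1, h2, h3⟩ := exists_perm3 h01 h02 h12 hab hac hbc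
          exact Or.inr (Or.inr (Or.inr (Or.inl ⟨σ, Or.inl
            (by simp [dbl_comp, spl_comp, h1, h2, h3])⟩)))
  · rcases classify g2 hx2 with ⟨c, rfl⟩ | ⟨c, d, hcd, rfl⟩
    · -- (spl a b, dbl c)
      by_cases hca : c = a
      · subst hca
        obtain ⟨σ, h1, h2⟩ := exists_perm2 h01 hab
        exact Or.inr (Or.inr (Or.inl ⟨σ, Or.inr
          (by simp [dbl_comp, spl_comp, h1, h2])⟩))
      · by_cases hcb : c = b
        · subst hcb
          obtain ⟨σ, h1, h2⟩ := exists_perm2 h01 hab.symm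
          exact Or.inr (Or.inr (Or.inl ⟨σ, Or.inr
            (by simp [dbl_comp, spl_comp, h1, h2, spl_comm a c])⟩))
        · obtain ⟨σ, h1, h2, h3⟩ := exists_perm3 h01 h02 h12 hca hcb hab
          exact Or.inr (Or.inr (Or.inr (Or.inl ⟨σ, Or.inr
            (by simp [dbl_comp, spl_comp, h1, h2, h3])⟩)))
    · -- (spl a b, spl c d)
      by_cases hac : a = c
      · subst hac
        by_cases hbd : b = d
        · subst hbd
          obtain ⟨σ, h1, h2⟩ := exists_perm2 h01 hab
          exact Or.inr (Or.inr (Or.inr (Or.inr (Or.inl ⟨σ, Or.inl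
            (by simp [spl_comp, h1, h2])⟩))))
        · obtain ⟨σ, h1, h2, h3⟩ := exists_perm3 h01 h02 h12 hab hcd hbd
          exact Or.inr (Or.inr (Or.inr (Or.inr (Or.inr (Or.inl ⟨σ, Or.inl
            (by simp [spl_comp, h1, h2, h3])⟩)))))
      · by_cases had : a = d
        · subst had
          by_cases hbc : b = c
          · subst hbc
            obtain ⟨σ, h1, h2⟩ := exists_perm2 h01 hab
            exact Or.inr (Or.inr (Or.inr (Or.inr (Or.inl ⟨σ, Or.inl
              (by simp [spl_comp, h1, h2, spl_comm a b])⟩))))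
          · obtain ⟨σ, h1, h2, h3⟩ := exists_perm3 h01 h02 h12 hab hac hbc
            exact Or.inr (Or.inr (Or.inr (Or.inr (Or.inr (Or.inl ⟨σ, Or.inl
              (by simp [spl_comp, h1, h2, h3, spl_comm a c])⟩)))))
        · by_cases hbc : b = c
          · subst hbc
            obtain ⟨σ, h1, h2, h3⟩ := exists_perm3 h01 h02 h12 hab.symm hcd had
            exact Or.inr (Or.inr (Or.inr (Or.inr (Or.inr (Or.inl ⟨σ, Or.inl
              (by simp [spl_comp, h1, h2, h3, spl_comm a b])⟩)))))
          · by_cases hbd : b = d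
            · subst hbd
              obtain ⟨σ, h1, h2, h3⟩ := exists_perm3 h01 h02 h12 hab.symm hbc hac
              exact Or.inr (Or.inr (Or.inr (Or.inr (Or.inr (Or.inl ⟨σ, Or.inl
                (by simp [spl_comp, h1, h2, h3, spl_comm a b, spl_comm c b])⟩)))))
            · obtain ⟨σ, h1, h2, h3, h4⟩ :=
                exists_perm4 h01 h02 h03 h12 h13 h23 hab hac had hbc hbd hcd
              exact Or.inr (Or.inr (Or.inr (Or.inr (Or.inr (Or.inr ⟨σ, Or.inl
                (by simp [spl_comp, h1, h2, h3, h4])⟩)))))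

end Aux3

set_option maxHeartbeats 1000000 in
/-- For `K = 2` and `I ≥ 4`, there are exactly 7 identity states. -/
theorem card_identityStates_two (I : ℕ) (hI : 4 ≤ I) :
    Nat.card (IdentityStates 2 I) = 7 := by
  set q0 : Fin I := ⟨0, by omega⟩ with hq0
  set q1 : Fin I := ⟨1, by omega⟩ with hq1
  set q2 : Fin I := ⟨2, by omega⟩ with hq2
  set q3 : Fin I := ⟨3, by omega⟩ with hq3
  have h01 : q0 ≠ q1 := Fin.ne_of_val_ne (by norm_num)
  have h02 : q0 ≠ q2 := Fin.ne_of_val_ne (by norm_num)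
  have h03 : q0 ≠ q3 := Fin.ne_of_val_ne (by norm_num)
  have h12 : q1 ≠ q2 := Fin.ne_of_val_ne (by norm_num)
  have h13 : q1 ≠ q3 := Fin.ne_of_val_ne (by norm_num)
  have h23 : q2 ≠ q3 := Fin.ne_of_val_ne (by norm_num)
  set r : Fin 7 → (Fin I → ℕ) × (Fin I → ℕ) :=
    ![(dbl q0, dbl q0), (dbl q0, dbl q1), (dbl q0, spl q0 q1),
      (dbl q0, spl q1 q2), (spl q0 q1, spl q0 q1), (spl q0 q1, spl q0 q2),
      (spl q0 q1, spl q2 q3)] with hr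
  have hsum1 : ∀ k, ∑ i, (r k).1 i = 2 := by
    intro k
    fin_cases k
    · exact sum_dbl q0
    · exact sum_dbl q0
    · exact sum_dbl q0
    · exact sum_dbl q0
    · exact sum_spl q0 q1
    · exact sum_spl q0 q1
    · exact sum_spl q0 q1
  have hsum2 : ∀ k, ∑ i, (r k).2 i = 2 := by
    intro k
    fin_cases k
    · exact sum_dbl q0
    · exact sum_dbl q1
    · exact sum_spl q0 q1
    · exact sum_spl q1 q2
    · exact sum_spl q0 q1
    · exact sum_spl q0 q2
    · exact sum_spl q2 q3
  set v : Fin 7 → ℕ × ℕ :=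
    ![(8, 4), (8, 0), (6, 2), (6, 0), (4, 2), (4, 1), (4, 0)] with hv
  have hphi : ∀ k, phi (r k) = v k := by
    have e01 := Ne.symm h01
    have e02 := Ne.symm h02
    have e03 := Ne.symm h03
    have e12 := Ne.symm h12
    have e13 := Ne.symm h13
    have e23 := Ne.symm h23
    intro k
    fin_cases k
    · show phi (dbl q0, dbl q0) = ((8 : ℕ), (4 : ℕ))
      simp [phi, sum_sq_dbl, inner_dbl_dbl]
    · show phi (dbl q0, dbl q1) = ((8 : ℕ), (0 : ℕ))
      simp [phi, sum_sq_dbl, inner_dbl_dbl, h01]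
    · show phi (dbl q0, spl q0 q1) = ((6 : ℕ), (2 : ℕ))
      simp [phi, sum_sq_dbl, sum_sq_spl h01, inner_dbl_spl, h01]
    · show phi (dbl q0, spl q1 q2) = ((6 : ℕ), (0 : ℕ))
      simp [phi, sum_sq_dbl, sum_sq_spl h12, inner_dbl_spl, h01, h02]
    · show phi (spl q0 q1, spl q0 q1) = ((4 : ℕ), (2 : ℕ))
      simp [phi, sum_sq_spl h01, inner_spl_spl, h01, e01]
    · show phi (spl q0 q1, spl q0 q2) = ((4 : ℕ), (1 : ℕ))
      simp [phi, sum_sq_spl h01, sum_sq_spl h02, inner_spl_spl,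
        h01, h02, h12, e01, e02, e12]
    · show phi (spl q0 q1, spl q2 q3) = ((4 : ℕ), (0 : ℕ))
      simp [phi, sum_sq_spl h01, sum_sq_spl h23, inner_spl_spl,
        h02, h03, h12, h13]
  set f : Fin 7 → IdentityStates 2 I :=
    fun k => ⟨pairOrbit I (r k), r k, hsum1 k, hsum2 k, rfl⟩ with hf
  have hbij : Function.Bijective f := by
    constructor
    · intro j k hjk
      have horb : pairOrbit I (r j) = pairOrbit I (r k) :=
        congrArg Subtype.val hjk
      have hmem : r j ∈ pairOrbit I (r k) := horb ▸ mem_pairOrbit_self (r j)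
      have hveq : v j = v k := by
        rw [← hphi j, ← hphi k]; exact phi_eq_of_mem hmem
      have hvinj : Function.Injective v := by rw [hv]; decide
      exact hvinj hveq
    · rintro ⟨S, x, hx1, hx2, rfl⟩
      rcases main_mem q0 q1 q2 q3 h01 h02 h03 h12 h13 h23 x hx1 hx2 with
        h | h | h | h | h | h | h
      · exact ⟨0, Subtype.ext ((pairOrbit_eq_of_mem h).symm :
          pairOrbit I (dbl q0, dbl q0) = pairOrbit I x)⟩
      · exact ⟨1, Subtype.ext ((pairOrbit_eq_of_mem h).symm :
          pairOrbit I (dbl q0, dbl q1) = pairOrbit I x)⟩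
      · exact ⟨2, Subtype.ext ((pairOrbit_eq_of_mem h).symm :
          pairOrbit I (dbl q0, spl q0 q1) = pairOrbit I x)⟩
      · exact ⟨3, Subtype.ext ((pairOrbit_eq_of_mem h).symm :
          pairOrbit I (dbl q0, spl q1 q2) = pairOrbit I x)⟩
      · exact ⟨4, Subtype.ext ((pairOrbit_eq_of_mem h).symm :
          pairOrbit I (spl q0 q1, spl q0 q1) = pairOrbit I x)⟩
      · exact ⟨5, Subtype.ext ((pairOrbit_eq_of_mem h).symm :
          pairOrbit I (spl q0 q1, spl q0 q2) = pairOrbit I x)⟩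
      · exact ⟨6, Subtype.ext ((pairOrbit_eq_of_mem h).symm :
          pairOrbit I (spl q0 q1, spl q2 q3) = pairOrbit I x)⟩
  exact Nat.card_eq_of_equiv_fin (Equiv.ofBijective f hbij).symm
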